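/- A bracket-monomial x_{t₁}⋯x_{t_l}[x_{r₁},x_{s₁}]⋯[x_{r_k},x_{s_k}] in F⟨X⟩ (with r_i < s_i for all i, k > 0) equals a linear combination of exactly 2^k pairwise distinct monomials in the free monoid ⟨X⟩, each with coefficient ±1. -/

import Mathlib

/-- The bracket-monomial `x_{t₁}⋯x_{t_l} [x_{r₁},x_{s₁}]⋯[x_{r_k},x_{s_k}]`
in the free algebra, encoded by the list `t` and the list `rs` of pairs. -/
noncomputable def bracketMonomial (F : Type) [Field F] (t : List ℕ) (rs : List (ℕ × ℕ)) :
    FreeAlgebra F ℕ :=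
  (t.map (FreeAlgebra.ι F)).prod *
    (rs.map fun p => FreeAlgebra.ι F p.1 * FreeAlgebra.ι F p.2 -
      FreeAlgebra.ι F p.2 * FreeAlgebra.ι F p.1).prod

private lemma bracket_prod_key (F : Type) [Field F] :
    ∀ (rs : List (ℕ × ℕ)), (∀ p ∈ rs, p.1 < p.2) →
    ∃ (w : (Fin rs.length → Bool) → List ℕ) (ε : (Fin rs.length → Bool) → F),
      Function.Injective w ∧ (∀ b, ε b = 1 ∨ ε b = -1) ∧
      (rs.map fun p => FreeAlgebra.ι F p.1 * FreeAlgebra.ι F p.2 -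
        FreeAlgebra.ι F p.2 * FreeAlgebra.ι F p.1).prod
        = ∑ b, ε b • ((w b).map (FreeAlgebra.ι F)).prod := by
  intro rs
  induction rs with
  | nil =>
    intro _
    refine ⟨fun _ => [], fun _ => 1, ?_, fun _ => Or.inl rfl, ?_⟩
    · intro a b _; funext i; exact absurd i.2 (by simp)
    · simp
  | cons p rs ih =>
    intro hlt
    obtain ⟨w, ε, hw, hε, heq⟩ := ih (fun q hq => hlt q (List.mem_cons_of_mem _ hq))
    have hp : p.1 ≠ p.2 := (hlt p List.mem_cons_self).ne
    simp only [List.length_cons]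
    refine ⟨fun b => (if b 0 then [p.2, p.1] else [p.1, p.2]) ++ w (fun i => b i.succ),
      fun b => (if b 0 then (-1 : F) else 1) * ε (fun i => b i.succ), ?_, ?_, ?_⟩
    · intro b₁ b₂ h
      have h0 : b₁ 0 = b₂ 0 := by
        by_contra hne
        have hhead := congrArg List.headI h
        cases hb1 : b₁ 0 <;> cases hb2 : b₂ 0 <;> simp [hb1, hb2] at hne hhead
        · exact hp hhead
        · exact hp hhead.symm
      have htail : (fun i : Fin rs.length => b₁ i.succ) = fun i : Fin rs.length => b₂ i.succ := by
        apply hw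
        have h' : (if b₁ 0 = true then [p.2, p.1] else [p.1, p.2]) ++ w (fun i => b₁ i.succ)
            = (if b₂ 0 = true then [p.2, p.1] else [p.1, p.2]) ++ w (fun i => b₂ i.succ) := h
        rw [h0] at h'
        exact List.append_cancel_left h'
      funext i
      refine Fin.cases h0 (fun j => ?_) i
      exact congrFun htail j
    · intro b
      rcases hε (fun i => b i.succ) with h | h <;> cases hb : b 0 <;> simp [hb, h]
    · have expand : ∀ (c : Bool) (b : Fin rs.length → Bool),
          (((if c then [p.2, p.1] else [p.1, p.2]) ++ w b).map (FreeAlgebra.ι F)).prod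
          = (if c then FreeAlgebra.ι F p.2 * FreeAlgebra.ι F p.1
              else FreeAlgebra.ι F p.1 * FreeAlgebra.ι F p.2) *
            ((w b).map (FreeAlgebra.ι F)).prod := by
        intro c b
        cases c <;> simp [List.prod_append, mul_assoc]
      rw [List.map_cons, List.prod_cons, heq, Finset.mul_sum]
      rw [← Equiv.sum_comp (Fin.consEquiv (fun _ : Fin (rs.length + 1) => Bool))]
      have hcons0 : ∀ (c : Bool) (b : Fin rs.length → Bool),
          (Fin.consEquiv (fun _ : Fin (rs.length + 1) => Bool)) (c, b) 0 = c := fun _ _ => rfl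
      have hconss : ∀ (c : Bool) (b : Fin rs.length → Bool) (i : Fin rs.length),
          (Fin.consEquiv (fun _ : Fin (rs.length + 1) => Bool)) (c, b) i.succ = b i :=
        fun _ _ _ => rfl
      rw [Fintype.sum_prod_type, Fintype.sum_bool]
      simp only [hcons0, hconss]
      simp [expand, mul_smul_comm, sub_mul, smul_sub, Finset.sum_sub_distrib, mul_assoc]
      abel

/-- A bracket-monomial with `k` brackets is a (±1)-linear combination of exactly
`2 ^ k` pairwise distinct monomials of the free monoid. -/
theorem bracketMonomial_eq_signed_sum (F : Type) [Field F]
    (t : List ℕ) (rs : List (ℕ × ℕ)) (hk : rs ≠ []) (hlt : ∀ p ∈ rs, p.1 < p.2) :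
    ∃ (w : Fin (2 ^ rs.length) → List ℕ) (ε : Fin (2 ^ rs.length) → F),
      Function.Injective w ∧ (∀ i, ε i = 1 ∨ ε i = -1) ∧
      bracketMonomial F t rs = ∑ i, ε i • ((w i).map (FreeAlgebra.ι F)).prod := by
  obtain ⟨w, ε, hw, hε, heq⟩ := bracket_prod_key F rs hlt
  have hcard : Fintype.card (Fin rs.length → Bool) = 2 ^ rs.length := by simp
  let e : (Fin rs.length → Bool) ≃ Fin (2 ^ rs.length) := Fintype.equivFinOfCardEq hcard
  refine ⟨fun i => t ++ w (e.symm i), fun i => ε (e.symm i), ?_, fun i => hε _, ?_⟩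
  · intro i j h
    exact e.symm.injective (hw (List.append_cancel_left h))
  · rw [bracketMonomial, heq, Finset.mul_sum]
    rw [← Equiv.sum_comp e]
    apply Finset.sum_congr rfl
    intro b _
    simp only [Equiv.symm_apply_apply]
    rw [mul_smul_comm, List.map_append, List.prod_append]
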